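/- For every odd integer n >= 3, the join of K3 with a perfect matching on n-3 vertices (i.e., the disjoint union of (n-3)/2 edges) has exactly (7n-15)/2 edges and has no minor in F3 = {K6 minus an edge, complement of C7, C5 + complement(K2), K_{3,1,3}-hat, Q3, V8}. -/

import Mathlib

namespace TwwPaper

open Finset

/-! ### Twin-width via contraction (partition-merge) sequences -/

/-- Two parts `P`, `Q` are *pure* (homogeneous) in `G`: the graph is either complete or empty
between them.  In the trigraph of a partition, a non-pure pair of parts is joined by a red edge. -/
def Pure {V : Type*} (G : SimpleGraph V) (P Q : Finset V) : Prop :=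
  (∀ x ∈ P, ∀ y ∈ Q, G.Adj x y) ∨ (∀ x ∈ P, ∀ y ∈ Q, ¬ G.Adj x y)

/-- The red degree of a part `P` in the partition `PP`: the number of other parts that are
not pure with respect to `P`. -/
noncomputable def redDeg {V : Type*} (G : SimpleGraph V) (PP : Finset (Finset V)) (P : Finset V) : ℕ :=
  {Q | Q ∈ PP ∧ Q ≠ P ∧ ¬ Pure G P Q}.ncard

/-- `QQ` is obtained from `PP` by merging (contracting) two parts. -/
def Merge {V : Type*} [DecidableEq V] (PP QQ : Finset (Finset V)) : Prop :=
  ∃ A ∈ PP, ∃ B ∈ PP, A ≠ B ∧ QQ = insert (A ∪ B) ((PP.erase A).erase B)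

/-- One contraction step keeping every red degree at most `d`. -/
def Step {V : Type*} [DecidableEq V] (G : SimpleGraph V) (d : ℕ) (PP QQ : Finset (Finset V)) :
    Prop :=
  Merge PP QQ ∧ ∀ P ∈ QQ, redDeg G QQ P ≤ d

/-- `G` admits a `d`-contraction sequence: starting from the partition into singletons one can
merge two parts at a time, always keeping all red degrees at most `d`, until one part remains. -/
def TwwLE {V : Type*} [Fintype V] [DecidableEq V] (G : SimpleGraph V) (d : ℕ) : Prop :=
  Relation.ReflTransGen (Step G d)
    (Finset.univ.image fun v => ({v} : Finset V)) {Finset.univ}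

/-- The twin-width of a finite simple graph. -/
noncomputable def tww {V : Type*} [Fintype V] [DecidableEq V] (G : SimpleGraph V) : ℕ :=
  sInf {d | TwwLE G d}

/-! ### Minors, separators, subgraph containment -/

/-- `H` is a minor of `G`: there is a minor model, i.e. pairwise disjoint nonempty connected
branch sets, one for each vertex of `H`, with an edge of `G` between the branch sets of any two
adjacent vertices of `H`. -/
def IsMinor {α β : Type*} (H : SimpleGraph α) (G : SimpleGraph β) : Prop :=
  ∃ f : α → Set β,
    (∀ a, (f a).Nonempty) ∧
    (∀ a, (G.induce (f a)).Connected) ∧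
    (∀ a b, a ≠ b → Disjoint (f a) (f b)) ∧
    ∀ a b, H.Adj a b → ∃ x ∈ f a, ∃ y ∈ f b, G.Adj x y

/-- `S` is a separator of `G` : deleting `S` leaves a nonempty disconnected graph. -/
def Sep {α : Type*} (G : SimpleGraph α) (S : Set α) : Prop :=
  (Sᶜ : Set α).Nonempty ∧ ¬ (G.induce Sᶜ).Preconnected

/-- `G` contains `F` as a (not necessarily induced) subgraph. -/
def ContainsSubgraph {α β : Type*} (G : SimpleGraph β) (F : SimpleGraph α) : Prop :=
  ∃ f : α → β, Function.Injective f ∧ ∀ a b, F.Adj a b → G.Adj (f a) (f b)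

/-- `G` is internally 4-connected. -/
def Internally4Connected {α : Type*} [Fintype α] (G : SimpleGraph α) : Prop :=
  5 ≤ Fintype.card α ∧
  (∀ S : Set α, S.ncard < 3 → ¬ Sep G S) ∧
  ∀ S : Set α, S.ncard = 3 → Sep G S →
    (∀ a ∈ S, ∀ b ∈ S, ¬ G.Adj a b) ∧ ∃ v ∉ S, G.neighborSet v = S

/-! ### The concrete graphs -/

/-- `K₆` minus one edge. -/
def K6minus : SimpleGraph (Fin 6) where
  Adj a b := a ≠ b ∧ ¬(({a, b} : Finset (Fin 6)) = {0, 1})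
  symm := by
    constructor
    rintro a b ⟨h1, h2⟩
    exact ⟨h1.symm, by rwa [Finset.pair_comm]⟩
  loopless := ⟨fun a h => h.1 rfl⟩

/-- The complement of the 7-cycle. -/
def C7c : SimpleGraph (Fin 7) := (SimpleGraph.cycleGraph 7)ᶜ

/-- Join of two graphs. -/
def joinG {α β : Type*} (G : SimpleGraph α) (H : SimpleGraph β) : SimpleGraph (α ⊕ β) where
  Adj x y :=
    match x, y with
    | Sum.inl a, Sum.inl b => G.Adj a b
    | Sum.inr a, Sum.inr b => H.Adj a b
    | _, _ => True
  symm := by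
    constructor
    rintro (a | a) (b | b) h
    · exact G.adj_symm h
    · exact trivial
    · exact trivial
    · exact H.adj_symm h
  loopless := by
    constructor
    rintro (a | a) h
    · exact G.loopless.irrefl a h
    · exact H.loopless.irrefl a h

/-- The join of `C₅` with the complement of `K₂` (two isolated vertices). -/
def C5K2c : SimpleGraph (Fin 5 ⊕ Fin 2) :=
  joinG (SimpleGraph.cycleGraph 5) (⊥ : SimpleGraph (Fin 2))

/-- The part of a vertex of `K_{3,1,3}`: `{0,1,2}`, `{3}`, `{4,5,6}`. -/
def triPart : Fin 7 → ℕ := fun a => if a.val < 3 then 0 else if a.val = 3 then 1 else 2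

/-- `K_{3,1̂,3}`: the complete tripartite graph `K_{3,1,3}` minus one edge from the middle
vertex `3` to each of the two size-3 parts (the edges `{0,3}` and `{3,4}`). -/
def K313hat : SimpleGraph (Fin 7) where
  Adj a b := triPart a ≠ triPart b ∧ ¬(({a, b} : Finset (Fin 7)) = {0, 3}) ∧
    ¬(({a, b} : Finset (Fin 7)) = {3, 4})
  symm := by
    constructor
    rintro a b ⟨h1, h2, h3⟩
    refine ⟨h1.symm, ?_, ?_⟩ <;> rwa [Finset.pair_comm]
  loopless := ⟨fun a h => h.1 rfl⟩

/-- The cube graph `Q₃`. -/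
def Q3 : SimpleGraph (Fin 2 × Fin 2 × Fin 2) where
  Adj x y := (x.1 ≠ y.1 ∧ x.2 = y.2) ∨ (x.1 = y.1 ∧ x.2.1 ≠ y.2.1 ∧ x.2.2 = y.2.2) ∨
    (x.1 = y.1 ∧ x.2.1 = y.2.1 ∧ x.2.2 ≠ y.2.2)
  symm := by
    constructor
    rintro x y (⟨h1, h2⟩ | ⟨h1, h2, h3⟩ | ⟨h1, h2, h3⟩)
    · exact Or.inl ⟨h1.symm, h2.symm⟩
    · exact Or.inr (Or.inl ⟨h1.symm, h2.symm, h3.symm⟩)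
    · exact Or.inr (Or.inr ⟨h1.symm, h2.symm, h3.symm⟩)
  loopless := by
    constructor
    rintro x (⟨h, -⟩ | ⟨-, h, -⟩ | ⟨-, -, h⟩) <;> exact h rfl

/-- The Wagner graph `V₈`: the 8-cycle plus the four main diagonals. -/
def V8 : SimpleGraph (Fin 8) where
  Adj a b := a ≠ b ∧ (b = a + 1 ∨ a = b + 1 ∨ b = a + 4)
  symm := by
    constructor
    rintro a b ⟨h, h1 | h1 | h1⟩
    · exact ⟨h.symm, Or.inr (Or.inl h1)⟩
    · exact ⟨h.symm, Or.inl h1⟩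
    · refine ⟨h.symm, Or.inr (Or.inr ?_)⟩
      subst h1
      have h4 : (4 : Fin 8) + 4 = 0 := by decide
      rw [add_assoc, h4, add_zero]
  loopless := by constructor; rintro a ⟨h, -⟩; exact h rfl

/-- `K₆` minus a perfect matching (`K₆^≡`), i.e. the octahedron `K_{2,2,2}`. -/
def K6mm3 : SimpleGraph (Fin 6) where
  Adj a b := a.val % 3 ≠ b.val % 3
  symm := ⟨fun _ _ h => h.symm⟩
  loopless := ⟨fun _ h => h rfl⟩

/-- `K₆` minus a matching of size two (`K₆^=`). -/
def K6mm2 : SimpleGraph (Fin 6) where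
  Adj a b := a ≠ b ∧ ¬(({a, b} : Finset (Fin 6)) = {0, 3}) ∧
    ¬(({a, b} : Finset (Fin 6)) = {1, 4})
  symm := by
    constructor
    rintro a b ⟨h1, h2, h3⟩
    refine ⟨h1.symm, ?_, ?_⟩ <;> rwa [Finset.pair_comm]
  loopless := ⟨fun a h => h.1 rfl⟩

/-- The join of the complement of `C₆` with a single vertex. -/
def C6cK1 : SimpleGraph (Fin 6 ⊕ Fin 1) :=
  joinG ((SimpleGraph.cycleGraph 6)ᶜ) (⊥ : SimpleGraph (Fin 1))

/-- A perfect matching graph on `Fin m` (`m` even): `2i` is matched to `2i+1`. -/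
def matchingGraph (m : ℕ) : SimpleGraph (Fin m) where
  Adj a b := a ≠ b ∧ a.val / 2 = b.val / 2
  symm := ⟨fun _ _ h => ⟨h.1.symm, h.2.symm⟩⟩
  loopless := ⟨fun _ h => h.1 rfl⟩

/-- The `m × n` grid graph. -/
def gridGraph (m n : ℕ) : SimpleGraph (Fin m × Fin n) where
  Adj p q := (p.1 = q.1 ∧ (p.2.val + 1 = q.2.val ∨ q.2.val + 1 = p.2.val)) ∨
    (p.2 = q.2 ∧ (p.1.val + 1 = q.1.val ∨ q.1.val + 1 = p.1.val))
  symm := by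
    constructor
    rintro p q (⟨h1, h2⟩ | ⟨h1, h2⟩)
    · exact Or.inl ⟨h1.symm, h2.symm⟩
    · exact Or.inr ⟨h1.symm, h2.symm⟩
  loopless := by constructor; rintro p (⟨-, h | h⟩ | ⟨-, h | h⟩) <;> omega

/-! ### `(Δ,Y)`-operation -/

/-- The `(Δ,Y)`-operation on the triangle `{x,y,z}` of `G`: delete the edges of the triangle
and add a new vertex (`none`) adjacent exactly to `x`, `y`, `z`. -/
def deltaY {α : Type*} (G : SimpleGraph α) (x y z : α) : SimpleGraph (Option α) where
  Adj a b :=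
    match a, b with
    | some a, some b => G.Adj a b ∧ ¬((a = x ∨ a = y ∨ a = z) ∧ (b = x ∨ b = y ∨ b = z))
    | some a, none => a = x ∨ a = y ∨ a = z
    | none, some b => b = x ∨ b = y ∨ b = z
    | none, none => False
  symm := by
    constructor
    rintro (_ | a) (_ | b) h
    · exact h.elim
    · exact h
    · exact h
    · exact ⟨h.1.symm, fun hc => h.2 ⟨hc.2, hc.1⟩⟩
  loopless := by
    constructor
    rintro (_ | a) h
    · exact h
    · exact G.loopless.irrefl a h.1

/-- `G` has a spanning subgraph isomorphic to a member of
`𝓕₃ = {K₆⁻, C₇ᶜ, C₅ + K₂ᶜ, K_{3,1̂,3}, Q₃, V₈}`. -/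
def HasSpanningF3 {α : Type*} (G : SimpleGraph α) : Prop :=
  ∃ H : SimpleGraph α, H ≤ G ∧
    (Nonempty (H ≃g K6minus) ∨ Nonempty (H ≃g C7c) ∨ Nonempty (H ≃g C5K2c) ∨
      Nonempty (H ≃g K313hat) ∨ Nonempty (H ≃g Q3) ∨ Nonempty (H ≃g V8))

/-- `G` has a minor in `𝓕₃`. -/
def HasF3Minor {α : Type*} (G : SimpleGraph α) : Prop :=
  IsMinor K6minus G ∨ IsMinor C7c G ∨ IsMinor C5K2c G ∨ IsMinor K313hat G ∨
    IsMinor Q3 G ∨ IsMinor V8 G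

/-! ### Subdivisions -/

/-- Vertices of the subdivision of `G` in which the edge `ab` (with `a < b`) receives
`ℓ a b` internal (subdivision) vertices: the original vertices plus, for each oriented edge,
`ℓ a b` new vertices. -/
def SubdivVert {α : Type*} [LT α] (G : SimpleGraph α) (ℓ : α → α → ℕ) : Type _ :=
  α ⊕ Σ e : {p : α × α // p.1 < p.2 ∧ G.Adj p.1 p.2}, Fin (ℓ e.1.1 e.1.2)

noncomputable instance SubdivVert.instFintype {α : Type*} [LT α] [Fintype α]
    (G : SimpleGraph α) (ℓ : α → α → ℕ) : Fintype (SubdivVert G ℓ) := by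
  classical
  unfold SubdivVert
  infer_instance

noncomputable instance SubdivVert.instDecidableEq {α : Type*} [LT α] [DecidableEq α]
    (G : SimpleGraph α) (ℓ : α → α → ℕ) : DecidableEq (SubdivVert G ℓ) := by
  classical
  unfold SubdivVert
  infer_instance

/-- The subdivision of `G` in which each edge `ab` (`a < b`) is replaced by a path with
`ℓ a b` internal vertices (so of length `ℓ a b + 1`); an edge with `ℓ a b = 0` stays an edge. -/
def Subdiv {α : Type*} [LT α] (G : SimpleGraph α) (ℓ : α → α → ℕ) :
    SimpleGraph (SubdivVert G ℓ) where
  Adj x y :=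
    match x, y with
    | Sum.inl a, Sum.inl b =>
        G.Adj a b ∧ ((a < b ∧ ℓ a b = 0) ∨ (b < a ∧ ℓ b a = 0))
    | Sum.inl a, Sum.inr ei =>
        (a = ei.1.1.1 ∧ (ei.2 : ℕ) = 0) ∨ (a = ei.1.1.2 ∧ (ei.2 : ℕ) + 1 = ℓ ei.1.1.1 ei.1.1.2)
    | Sum.inr ei, Sum.inl a =>
        (a = ei.1.1.1 ∧ (ei.2 : ℕ) = 0) ∨ (a = ei.1.1.2 ∧ (ei.2 : ℕ) + 1 = ℓ ei.1.1.1 ei.1.1.2)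
    | Sum.inr ei, Sum.inr ej =>
        ei.1 = ej.1 ∧ ((ei.2 : ℕ) + 1 = (ej.2 : ℕ) ∨ (ej.2 : ℕ) + 1 = (ei.2 : ℕ))
  symm := by
    constructor
    rintro (a | ei) (b | ej) h
    · exact ⟨h.1.symm, h.2.symm⟩
    · exact h
    · exact h
    · exact ⟨h.1.symm, h.2.symm⟩
  loopless := by
    constructor
    rintro (a | ei) h
    · exact G.loopless.irrefl a h.1
    · rcases h.2 with h' | h' <;> omega

/-- Lexicographic order on the vertex set of a grid, used to orient its edges. -/
def lexLT {m n : ℕ} : LT (Fin m × Fin n) :=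
  ⟨fun p q => p.1 < q.1 ∨ (p.1 = q.1 ∧ p.2 < q.2)⟩


/-! ### Auxiliary material for Statement 18 -/

/-- The extremal graph: join of `K₃` with a perfect matching on `m` vertices. -/
abbrev GJ (m : ℕ) : SimpleGraph (Fin 3 ⊕ Fin m) :=
  joinG (⊤ : SimpleGraph (Fin 3)) (matchingGraph m)

instance GJdec (m : ℕ) : DecidableRel (GJ m).Adj
  | Sum.inl a, Sum.inl b => decidable_of_iff (a ≠ b) Iff.rfl
  | Sum.inl _, Sum.inr _ => .isTrue trivial
  | Sum.inr _, Sum.inl _ => .isTrue trivial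
  | Sum.inr a, Sum.inr b => decidable_of_iff (a ≠ b ∧ a.val / 2 = b.val / 2) Iff.rfl

/-- The pair index of a vertex: `0` on the `K₃` side, `a/2` for matching vertex `a`. -/
def pidx {m : ℕ} : Fin 3 ⊕ Fin m → ℕ := Sum.elim (fun _ => 0) (fun a => a.val / 2)

lemma pi_adj {m : ℕ} {x y : Fin 3 ⊕ Fin m} (hx : ∀ a : Fin 3, x ≠ Sum.inl a)
    (hy : ∀ a : Fin 3, y ≠ Sum.inl a) (h : (GJ m).Adj x y) : pidx x = pidx y := by
  cases x with
  | inl a => exact absurd rfl (hx a)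
  | inr a =>
    cases y with
    | inl b => exact absurd rfl (hy b)
    | inr b => exact h.2

lemma pi_walk {m : ℕ} {s : Set (Fin 3 ⊕ Fin m)}
    (hs : ∀ x ∈ s, ∀ a : Fin 3, x ≠ Sum.inl a) :
    ∀ {u v : s}, (((GJ m).induce s).Walk u v) → pidx u.val = pidx v.val := by
  intro u v w
  induction w with
  | nil => rfl
  | @cons u b v h p ih =>
    exact (pi_adj (hs u.val u.2) (hs b.val b.2) h).trans ih

lemma pi_const {m : ℕ} {s : Set (Fin 3 ⊕ Fin m)}
    (hc : ((GJ m).induce s).Connected)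
    (hs : ∀ x ∈ s, ∀ a : Fin 3, x ≠ Sum.inl a) :
    ∀ x ∈ s, ∀ y ∈ s, pidx x = pidx y := by
  intro x hx y hy
  obtain ⟨w⟩ := hc.preconnected ⟨x, hx⟩ ⟨y, hy⟩
  exact pi_walk hs w

/-- Key structural lemma: any minor of `GJ m` has, after removing at most three vertices,
maximum degree at most one. -/
lemma key_struct {α : Type*} [Fintype α] [DecidableEq α] (H : SimpleGraph α) {m : ℕ}
    (hdec : ∀ T : Finset α, T.card ≤ 3 → ∃ v w₁ w₂ : α, v ∉ T ∧ w₁ ∉ T ∧ w₂ ∉ T ∧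
      w₁ ≠ w₂ ∧ H.Adj v w₁ ∧ H.Adj v w₂) :
    ¬ IsMinor H (GJ m) := by
  classical
  rintro ⟨f, h1, h2, h3, h4⟩
  set T : Finset α := Finset.univ.filter (fun v => ∃ a : Fin 3, Sum.inl a ∈ f v) with hT
  have hmemT : ∀ v, v ∈ T ↔ ∃ a : Fin 3, Sum.inl a ∈ f v := by
    intro v; simp [hT]
  have hcard : T.card ≤ 3 := by
    have : T.card ≤ (Finset.univ : Finset (Fin 3)).card := by
      apply Finset.card_le_card_of_injOn
        (fun v => if h : ∃ a : Fin 3, Sum.inl a ∈ f v then h.choose else 0)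
      · intro v _; exact Finset.mem_univ _
      · intro v₁ hv₁ v₂ hv₂ heq
        by_contra hne
        have h₁ := (hmemT v₁).mp hv₁
        have h₂ := (hmemT v₂).mp hv₂
        simp only [dif_pos h₁, dif_pos h₂] at heq
        have m₁ := h₁.choose_spec
        have m₂ := h₂.choose_spec
        rw [heq] at m₁
        exact (Set.disjoint_left.mp (h3 v₁ v₂ hne)) m₁ m₂
    simpa using this
  obtain ⟨v, w₁, w₂, hv, hw₁, hw₂, hne, ha₁, ha₂⟩ := hdec T hcard
  have hsub : ∀ u, u ∉ T → ∀ x ∈ f u, ∀ a : Fin 3, x ≠ Sum.inl a := by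
    intro u hu x hx a hxa
    exact hu ((hmemT u).mpr ⟨a, hxa ▸ hx⟩)
  obtain ⟨x₁, hx₁, y₁, hy₁, hxy₁⟩ := h4 v w₁ ha₁
  obtain ⟨x₂, hx₂, y₂, hy₂, hxy₂⟩ := h4 v w₂ ha₂
  have hsv := hsub v hv
  have hsw₁ := hsub w₁ hw₁
  have hsw₂ := hsub w₂ hw₂
  obtain ⟨a₁, rfl⟩ : ∃ a, x₁ = Sum.inr a := by
    cases x₁ with
    | inl a => exact absurd rfl (hsv _ hx₁ a)
    | inr a => exact ⟨a, rfl⟩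
  obtain ⟨a₂, rfl⟩ : ∃ a, x₂ = Sum.inr a := by
    cases x₂ with
    | inl a => exact absurd rfl (hsv _ hx₂ a)
    | inr a => exact ⟨a, rfl⟩
  obtain ⟨b₁, rfl⟩ : ∃ a, y₁ = Sum.inr a := by
    cases y₁ with
    | inl a => exact absurd rfl (hsw₁ _ hy₁ a)
    | inr a => exact ⟨a, rfl⟩
  obtain ⟨b₂, rfl⟩ : ∃ a, y₂ = Sum.inr a := by
    cases y₂ with
    | inl a => exact absurd rfl (hsw₂ _ hy₂ a)
    | inr a => exact ⟨a, rfl⟩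
  have e1 : a₁.val / 2 = b₁.val / 2 := hxy₁.2
  have e2 : a₂.val / 2 = b₂.val / 2 := hxy₂.2
  have e3 : a₁.val / 2 = a₂.val / 2 :=
    pi_const (h2 v) hsv _ hx₁ _ hx₂
  have d1 : a₁.val ≠ b₁.val := fun h => hxy₁.1 (Fin.ext h)
  have d2 : b₁.val ≠ b₂.val := by
    intro h
    have hb : (Sum.inr b₁ : Fin 3 ⊕ Fin m) = Sum.inr b₂ := by rw [Fin.ext h]
    rw [hb] at hy₁
    exact (Set.disjoint_left.mp (h3 w₁ w₂ hne)) hy₁ hy₂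
  have d3 : a₁.val ≠ b₂.val := by
    intro h
    have hb : (Sum.inr a₁ : Fin 3 ⊕ Fin m) = Sum.inr b₂ := by rw [Fin.ext h]
    rw [hb] at hx₁
    exact (Set.disjoint_left.mp (h3 v w₂ ha₂.ne)) hx₁ hy₂
  omega

/-- The property checked by `decide` for each member of `𝓕₃`. -/
def badProp {α : Type*} [Fintype α] [DecidableEq α] (H : SimpleGraph α)
    [DecidableRel H.Adj] : Prop :=
  ∀ T : Finset α, T.card ≤ 3 → ∃ v w₁ w₂ : α, v ∉ T ∧ w₁ ∉ T ∧ w₂ ∉ T ∧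
    w₁ ≠ w₂ ∧ H.Adj v w₁ ∧ H.Adj v w₂

instance {α : Type*} [Fintype α] [DecidableEq α] (H : SimpleGraph α)
    [DecidableRel H.Adj] : Decidable (badProp H) := by
  unfold badProp; infer_instance

instance : DecidableRel K6minus.Adj :=
  fun a b => decidable_of_iff (a ≠ b ∧ ¬(({a, b} : Finset (Fin 6)) = {0, 1})) Iff.rfl

instance joinGDec {α β : Type*} (G : SimpleGraph α) (H : SimpleGraph β)
    [DecidableRel G.Adj] [DecidableRel H.Adj] : DecidableRel (joinG G H).Adj
  | Sum.inl a, Sum.inl b => decidable_of_iff (G.Adj a b) Iff.rfl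
  | Sum.inl _, Sum.inr _ => .isTrue trivial
  | Sum.inr _, Sum.inl _ => .isTrue trivial
  | Sum.inr a, Sum.inr b => decidable_of_iff (H.Adj a b) Iff.rfl

instance : DecidableRel C7c.Adj := fun _ _ => inferInstanceAs (Decidable (_ ∧ _))
instance : DecidableRel C5K2c.Adj := joinGDec _ _
instance : DecidableRel K313hat.Adj :=
  fun a b => decidable_of_iff (triPart a ≠ triPart b ∧ ¬(({a, b} : Finset (Fin 7)) = {0, 3}) ∧
    ¬(({a, b} : Finset (Fin 7)) = {3, 4})) Iff.rfl
instance : DecidableRel Q3.Adj := fun _ _ => inferInstanceAs (Decidable (_ ∨ _))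
instance : DecidableRel V8.Adj := fun _ _ => inferInstanceAs (Decidable (_ ∧ _))

set_option maxRecDepth 8000 in
lemma bad_K6minus : badProp K6minus := by decide
set_option maxRecDepth 8000 in
lemma bad_C7c : badProp C7c := by decide
set_option maxRecDepth 8000 in
lemma bad_C5K2c : badProp C5K2c := by decide
set_option maxRecDepth 8000 in
lemma bad_K313hat : badProp K313hat := by decide
set_option maxRecDepth 8000 in
lemma bad_Q3 : badProp Q3 := by decide
set_option maxRecDepth 8000 in
lemma bad_V8 : badProp V8 := by decide

lemma deg_inl (m : ℕ) (a : Fin 3) : (GJ m).degree (Sum.inl a) = m + 2 := by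
  have h : (GJ m).neighborFinset (Sum.inl a) = Finset.univ.erase (Sum.inl a) := by
    ext x
    rw [SimpleGraph.mem_neighborFinset, Finset.mem_erase]
    cases x with
    | inl b =>
      constructor
      · intro h; exact ⟨by simpa using (Ne.symm h), Finset.mem_univ _⟩
      · intro h; exact (fun hh : a = b => (by simp [hh] at h) : a ≠ b)
    | inr b => simp [joinG]
  rw [SimpleGraph.degree, h, Finset.card_erase_of_mem (Finset.mem_univ _)]
  simp [Fintype.card_sum]; omega

lemma deg_inr (m : ℕ) (hm : m % 2 = 0) (a : Fin m) :
    (GJ m).degree (Sum.inr a) = 4 := by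
  have hp : (if a.val % 2 = 0 then a.val + 1 else a.val - 1) < m := by
    have := a.isLt; split <;> omega
  set p : Fin m := ⟨if a.val % 2 = 0 then a.val + 1 else a.val - 1, hp⟩ with hpdef
  have h : (GJ m).neighborFinset (Sum.inr a) =
      {Sum.inl 0, Sum.inl 1, Sum.inl 2, Sum.inr p} := by
    ext x
    rw [SimpleGraph.mem_neighborFinset]
    cases x with
    | inl b =>
      have hb : b = 0 ∨ b = 1 ∨ b = 2 := by omega
      have hadj : (GJ m).Adj (Sum.inr a) (Sum.inl b) := trivial
      simp only [Finset.mem_insert, Finset.mem_singleton]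
      rcases hb with rfl | rfl | rfl <;> simp [hadj]
    | inr b =>
      have hiff : (GJ m).Adj (Sum.inr a) (Sum.inr b) ↔ (a ≠ b ∧ a.val / 2 = b.val / 2) :=
        Iff.rfl
      simp only [Finset.mem_insert, Finset.mem_singleton, hiff]
      constructor
      · rintro ⟨hne, hdiv⟩
        have hne' : a.val ≠ b.val := fun h => hne (Fin.ext h)
        have hb : b.val = (p : Fin m).val := by
          have := a.isLt; have := b.isLt
          simp only [hpdef]
          split <;> omega
        right; right; right
        exact congrArg Sum.inr (Fin.ext hb)
      · intro h
        rcases h with h | h | h | h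
        · exact absurd h (by simp)
        · exact absurd h (by simp)
        · exact absurd h (by simp)
        · have hb : b = p := by simpa using h
          subst hb
          constructor
          · intro h
            have := congrArg Fin.val h
            simp only [hpdef] at this
            split at this <;> omega
          · have := a.isLt
            simp only [hpdef]
            split <;> omega
  rw [SimpleGraph.degree, h]
  have h0 : (Sum.inl 0 : Fin 3 ⊕ Fin m) ∉ ({Sum.inl 1, Sum.inl 2, Sum.inr p} : Finset _) := by
    simp
  have h1 : (Sum.inl 1 : Fin 3 ⊕ Fin m) ∉ ({Sum.inl 2, Sum.inr p} : Finset _) := by simp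
  have h2 : (Sum.inl 2 : Fin 3 ⊕ Fin m) ∉ ({Sum.inr p} : Finset _) := by simp
  rw [Finset.card_insert_of_notMem h0, Finset.card_insert_of_notMem h1,
    Finset.card_insert_of_notMem h2, Finset.card_singleton]

lemma edge_count (m : ℕ) (hm : m % 2 = 0) :
    (GJ m).edgeSet.ncard = (7 * m + 6) / 2 := by
  have hsum := SimpleGraph.sum_degrees_eq_twice_card_edges (GJ m)
  rw [Fintype.sum_sum_type] at hsum
  simp only [deg_inl m, deg_inr m hm] at hsum
  rw [Finset.sum_const, Finset.sum_const, Finset.card_univ, Finset.card_univ] at hsum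
  simp only [Fintype.card_fin, smul_eq_mul] at hsum
  have h : (GJ m).edgeSet.ncard = (GJ m).edgeFinset.card := by
    rw [SimpleGraph.edgeFinset, ← Set.ncard_eq_toFinset_card']
  rw [h]
  omega

/-- For every odd `n ≥ 3`, the join of `K₃` with a perfect matching on
`n - 3` vertices has exactly `(7n-15)/2` edges and no minor in `𝓕₃`. -/
theorem joinK3Matching_extremal (n : ℕ) (hn : 3 ≤ n) (hodd : Odd n) :
    (joinG (⊤ : SimpleGraph (Fin 3)) (matchingGraph (n - 3))).edgeSet.ncard =
        (7 * n - 15) / 2 ∧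
    ¬ HasF3Minor (joinG (⊤ : SimpleGraph (Fin 3)) (matchingGraph (n - 3))) := by
  have hm : (n - 3) % 2 = 0 := by
    obtain ⟨k, hk⟩ := hodd
    omega
  constructor
  · have h6 : 7 * (n - 3) + 6 = 7 * n - 15 := by omega
    have := edge_count (n - 3) hm
    rw [this, h6]
  · rintro (h | h | h | h | h | h)
    · exact key_struct K6minus bad_K6minus h
    · exact key_struct C7c bad_C7c h
    · exact key_struct C5K2c bad_C5K2c h
    · exact key_struct K313hat bad_K313hat h
    · exact key_struct Q3 bad_Q3 h
    · exact key_struct V8 bad_V8 h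


end TwwPaper
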